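/- arXiv:1406.7309 — 4 statements merged into one kernel-verified Lean document; each statement's English description precedes it below -/
import Mathlib

section
/- The Klein (Cayley-Klein) distance on the open unit disk, defined via d(x,y) = (1/2) log((|a−y||b−x|)/(|a−x||b−y|)) where a, b are the two intersection points of the line xy with the unit circle taken in the order a, x, y, b, satisfies d(x,y) = arccosh((1 − ⟨x,y⟩)/(sqrt(1−|x|²) sqrt(1−|y|²))). -/
open Metric

/-- The inverse hyperbolic cosine. -/
noncomputable def arcosh (x : ℝ) : ℝ := Real.log (x + Real.sqrt (x ^ 2 - 1))

lemma klein_key (p q : ℝ) (hp : 0 < p) (hq : 1 < q) :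
    1 / 2 * Real.log ((1 + p) * q / (p * (q - 1))) =
      arcosh ((2 * p * q + q - p) / (2 * Real.sqrt (p * q * ((1 + p) * (q - 1))))) := by
  have hq0 : 0 < q := lt_trans one_pos hq
  have hq1 : 0 < q - 1 := by linarith
  have hD : 0 < p * q * ((1 + p) * (q - 1)) := by positivity
  set R := Real.sqrt (p * q * ((1 + p) * (q - 1))) with hR
  have hsD : 0 < R := Real.sqrt_pos.mpr hD
  have hR2 : R ^ 2 = p * q * ((1 + p) * (q - 1)) := Real.sq_sqrt hD.le
  have hnum : 0 < 2 * p * q + q - p := by nlinarith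
  unfold arcosh
  have hc2 : ((2 * p * q + q - p) / (2 * R)) ^ 2 - 1 = ((p + q) / (2 * R)) ^ 2 := by
    field_simp
    linear_combination -4 * hR2
  rw [hc2, Real.sqrt_sq (by positivity)]
  have hsum : (2 * p * q + q - p) / (2 * R) + (p + q) / (2 * R) = (1 + p) * q / R := by
    field_simp; ring
  rw [hsum]
  have hCR : (1 + p) * q / (p * (q - 1)) = ((1 + p) * q / R) ^ 2 := by
    rw [div_pow, hR2, div_eq_div_iff (mul_pos hp hq1).ne' hD.ne']
    ring
  rw [hCR, Real.log_pow]
  push_cast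
  ring

/-- The Cayley–Klein distance `(1/2) log ((|a-y||b-x|)/(|a-x||b-y|))`, where `a`, `b`
are the intersection points of the chord through `x`, `y` with the unit circle,
in the order `a, x, y, b`, equals
`arccosh ((1 - ⟨x,y⟩)/(√(1-|x|²) √(1-|y|²)))`. -/
theorem klein_dist_eq_arcosh (x y a b : EuclideanSpace ℝ (Fin 2))
    (hx : ‖x‖ < 1) (hy : ‖y‖ < 1) (hxy : x ≠ y)
    (ha : ‖a‖ = 1) (hb : ‖b‖ = 1)
    (hsa : ∃ s : ℝ, s < 0 ∧ a = x + s • (y - x))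
    (htb : ∃ t : ℝ, 1 < t ∧ b = x + t • (y - x)) :
    (1 / 2) * Real.log ((‖a - y‖ * ‖b - x‖) / (‖a - x‖ * ‖b - y‖)) =
      arcosh ((1 - inner ℝ x y) /
        (Real.sqrt (1 - ‖x‖ ^ 2) * Real.sqrt (1 - ‖y‖ ^ 2))) := by
  obtain ⟨s, hs, has⟩ := hsa
  obtain ⟨t, ht, hbt⟩ := htb
  set u : EuclideanSpace ℝ (Fin 2) := y - x with hu
  have hu0 : u ≠ 0 := sub_ne_zero.mpr (Ne.symm hxy)
  have hL : 0 < ‖u‖ := norm_pos_iff.mpr hu0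
  set A : ℝ := ‖u‖ ^ 2 with hA
  have hA0 : 0 < A := by positivity
  set B : ℝ := inner ℝ x u with hB
  have expand : ∀ r : ℝ, ‖x + r • u‖ ^ 2 = ‖x‖ ^ 2 + 2 * (r * B) + r ^ 2 * A := by
    intro r
    rw [norm_add_sq_real, real_inner_smul_right, norm_smul, Real.norm_eq_abs, mul_pow, sq_abs]
  have h1 : ‖x‖ ^ 2 + 2 * (s * B) + s ^ 2 * A = 1 := by
    rw [← expand s, ← has, ha]; norm_num
  have h2 : ‖x‖ ^ 2 + 2 * (t * B) + t ^ 2 * A = 1 := by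
    rw [← expand t, ← hbt, hb]; norm_num
  have hstne : s ≠ t := by linarith
  have hsum : A * (s + t) + 2 * B = 0 := by
    have h3 : (t - s) * (A * (s + t) + 2 * B) = 0 := by linear_combination h2 - h1
    have h4 : t - s ≠ 0 := sub_ne_zero.mpr (Ne.symm hstne)
    exact (mul_eq_zero.mp h3).resolve_left h4
  have hC : 1 - ‖x‖ ^ 2 = A * (-s * t) := by linear_combination -h1 + s * hsum
  have hyx : ‖y‖ ^ 2 = ‖x‖ ^ 2 + 2 * B + A := by
    have h5 : y = x + (1 : ℝ) • u := by rw [hu, one_smul]; abel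
    rw [h5, expand 1]; ring
  have hy2 : 1 - ‖y‖ ^ 2 = A * ((1 + -s) * (t - 1)) := by
    linear_combination hC - hyx - hsum
  have hxy2 : (inner ℝ x y : ℝ) = ‖x‖ ^ 2 + B := by
    have h5 : y = x + u := by rw [hu]; abel
    rw [h5, inner_add_right, real_inner_self_eq_norm_sq, hB]
  have hinner : 1 - (inner ℝ x y : ℝ) = A * (2 * -s * t + t - -s) / 2 := by
    linear_combination hC - hxy2 - (1 / 2) * hsum
  -- norms of the four segments
  have hax : ‖a - x‖ = -s * ‖u‖ := by
    have h5 : a - x = s • u := by rw [has]; abel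
    rw [h5, norm_smul, Real.norm_eq_abs, abs_of_neg hs]
  have hay : ‖a - y‖ = (1 + -s) * ‖u‖ := by
    have h5 : a - y = (s - 1) • u := by rw [has, hu]; module
    rw [h5, norm_smul, Real.norm_eq_abs, abs_of_neg (by linarith : s - 1 < 0)]
    ring
  have hbx : ‖b - x‖ = t * ‖u‖ := by
    have h5 : b - x = t • u := by rw [hbt]; abel
    rw [h5, norm_smul, Real.norm_eq_abs, abs_of_pos (by linarith : (0:ℝ) < t)]
  have hby : ‖b - y‖ = (t - 1) * ‖u‖ := by
    have h5 : b - y = (t - 1) • u := by rw [hbt, hu]; module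
    rw [h5, norm_smul, Real.norm_eq_abs, abs_of_pos (by linarith : (0:ℝ) < t - 1)]
  have hns : -s ≠ 0 := ne_of_gt (by linarith : (0:ℝ) < -s)
  have ht0 : t - 1 ≠ 0 := ne_of_gt (by linarith : (0:ℝ) < t - 1)
  have hratio : ‖a - y‖ * ‖b - x‖ / (‖a - x‖ * ‖b - y‖) = (1 + -s) * t / (-s * (t - 1)) := by
    rw [hax, hay, hbx, hby]
    rw [show (1 + -s) * ‖u‖ * (t * ‖u‖) = (1 + -s) * t * (‖u‖ * ‖u‖) by ring]
    rw [show -s * ‖u‖ * ((t - 1) * ‖u‖) = -s * (t - 1) * (‖u‖ * ‖u‖) by ring]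
    rw [mul_div_mul_right _ _ (by positivity : ‖u‖ * ‖u‖ ≠ 0)]
  have hP0 : (0:ℝ) ≤ -s * t := by nlinarith
  have hsplit : Real.sqrt (1 - ‖x‖ ^ 2) * Real.sqrt (1 - ‖y‖ ^ 2) =
      A * Real.sqrt (-s * t * ((1 + -s) * (t - 1))) := by
    rw [hC, hy2, Real.sqrt_mul hA0.le, Real.sqrt_mul hA0.le, Real.sqrt_mul hP0]
    calc Real.sqrt A * Real.sqrt (-s * t) * (Real.sqrt A * Real.sqrt ((1 + -s) * (t - 1)))
        = (Real.sqrt A * Real.sqrt A) * (Real.sqrt (-s * t) * Real.sqrt ((1 + -s) * (t - 1))) := by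
          ring
      _ = A * (Real.sqrt (-s * t) * Real.sqrt ((1 + -s) * (t - 1))) := by
          rw [Real.mul_self_sqrt hA0.le]
  have hcarg : (1 - (inner ℝ x y : ℝ)) /
      (Real.sqrt (1 - ‖x‖ ^ 2) * Real.sqrt (1 - ‖y‖ ^ 2)) =
      (2 * -s * t + t - -s) / (2 * Real.sqrt (-s * t * ((1 + -s) * (t - 1)))) := by
    rw [hinner, hsplit, div_div,
      show (2:ℝ) * (A * Real.sqrt (-s * t * ((1 + -s) * (t - 1)))) =
        A * (2 * Real.sqrt (-s * t * ((1 + -s) * (t - 1)))) by ring,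
      mul_div_mul_left _ _ hA0.ne']
  rw [hratio, hcarg]
  exact klein_key (-s) t (by linarith) ht
end

section
/- Degeneration of Klein's hyperbolic distance to the Euclidean distance: for fixed points x, y ∈ ℝ², the rescaled Cayley-Klein distance on the disk of radius R, namely R · d_R(x, y) where d_R is the Klein metric of the disk {|p| < R} (given by arccosh((R² − ⟨x,y⟩)/(sqrt(R²−|x|²) sqrt(R²−|y|²)))), converges to the Euclidean distance |x − y| as R → ∞. -/
open Filter

/-- The Cayley–Klein distance of the disk of radius `R`. -/
noncomputable def kleinDistR (R : ℝ) (x y : EuclideanSpace ℝ (Fin 2)) : ℝ :=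
  arcosh ((R ^ 2 - (inner ℝ x y : ℝ)) /
    (Real.sqrt (R ^ 2 - ‖x‖ ^ 2) * Real.sqrt (R ^ 2 - ‖y‖ ^ 2)))

lemma aux_log_slope :
    Tendsto (fun b : ℝ => Real.log b / (b - 1)) (nhdsWithin 1 {(1:ℝ)}ᶜ) (nhds 1) := by
  have h := (Real.hasDerivAt_log one_ne_zero)
  rw [hasDerivAt_iff_tendsto_slope] at h
  have e : slope Real.log 1 = fun b => Real.log b / (b - 1) := by
    funext b; simp [slope_def_field, Real.log_one]
  rw [e] at h; simpa using h

lemma aux_ev_lt (f : ℝ → ℝ) (hf : ContinuousAt f 0) (c : ℝ) (h : f 0 < c) :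
    ∀ᶠ t in nhdsWithin (0:ℝ) (Set.Ioi 0), f t < c :=
  Tendsto.eventually_lt_const h (hf.tendsto.mono_left nhdsWithin_le_nhds)

/-- The key one-variable limit, with `t = 1/R`. -/
lemma aux_key (n m p d : ℝ) (hd2 : d ^ 2 = n ^ 2 - 2 * p + m ^ 2) (hd : 0 < d) :
    Tendsto (fun t : ℝ => (1 / t) * arcosh
      ((1 - p * t ^ 2) /
        (Real.sqrt (1 - n ^ 2 * t ^ 2) * Real.sqrt (1 - m ^ 2 * t ^ 2))))
      (nhdsWithin 0 (Set.Ioi 0)) (nhds d) := by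
  set C : ℝ := p ^ 2 - n ^ 2 * m ^ 2 with hC
  set E : ℝ → ℝ := fun t => Real.sqrt (1 - n ^ 2 * t ^ 2) * Real.sqrt (1 - m ^ 2 * t ^ 2)
    with hEdef
  set F : ℝ → ℝ := fun t =>
      t * (d ^ 2 + C * t ^ 2) / (E t * (1 - p * t ^ 2 + E t))
        + Real.sqrt (d ^ 2 + C * t ^ 2) / E t with hFdef
  have hEval : ∀ s : ℝ, E s = Real.sqrt (1 - n ^ 2 * s ^ 2) * Real.sqrt (1 - m ^ 2 * s ^ 2) :=
    fun s => by rw [hEdef]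
  have hFval : ∀ s : ℝ, F s =
      s * (d ^ 2 + C * s ^ 2) / (E s * (1 - p * s ^ 2 + E s))
        + Real.sqrt (d ^ 2 + C * s ^ 2) / E s := fun s => by rw [hFdef]
  have hq : ∀ c : ℝ, Continuous fun t : ℝ => c * t ^ 2 :=
    fun c => continuous_const.mul (continuous_pow 2)
  have hEcont : Continuous E :=
    (Real.continuous_sqrt.comp (continuous_const.sub (hq _))).mul
      (Real.continuous_sqrt.comp (continuous_const.sub (hq _)))
  have hE0 : E 0 = 1 := by simp [hEval 0]
  have hF0 : F 0 = d := by
    simp [hFval 0, hE0, Real.sqrt_sq hd.le]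
  have hFcont : ContinuousAt F 0 := by
    rw [hFdef]
    apply ContinuousAt.add
    · apply ContinuousAt.div
      · exact (continuous_id.mul (continuous_const.add (hq C))).continuousAt
      · exact (hEcont.mul ((continuous_const.sub (hq p)).add hEcont)).continuousAt
      · simp [hE0]
    · apply ContinuousAt.div
      · exact (Real.continuous_sqrt.comp (continuous_const.add (hq C))).continuousAt
      · exact hEcont.continuousAt
      · simp [hE0]
  have hFt : Tendsto F (nhdsWithin 0 (Set.Ioi 0)) (nhds d) := by
    rw [← hF0]
    exact hFcont.tendsto.mono_left nhdsWithin_le_nhds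
  -- eventual smallness facts
  have h1 : ∀ᶠ t in nhdsWithin (0:ℝ) (Set.Ioi 0), 0 < t :=
    eventually_nhdsWithin_of_forall (fun t ht => ht)
  have h2 : ∀ᶠ t in nhdsWithin (0:ℝ) (Set.Ioi 0), n ^ 2 * t ^ 2 < 1 :=
    aux_ev_lt _ (hq _).continuousAt 1 (by norm_num)
  have h3 : ∀ᶠ t in nhdsWithin (0:ℝ) (Set.Ioi 0), m ^ 2 * t ^ 2 < 1 :=
    aux_ev_lt _ (hq _).continuousAt 1 (by norm_num)
  have h4 : ∀ᶠ t in nhdsWithin (0:ℝ) (Set.Ioi 0), p * t ^ 2 < 1 :=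
    aux_ev_lt _ (hq _).continuousAt 1 (by norm_num)
  have h5 : ∀ᶠ t in nhdsWithin (0:ℝ) (Set.Ioi 0), 0 < d ^ 2 + C * t ^ 2 := by
    have := aux_ev_lt (fun t => -(d ^ 2 + C * t ^ 2))
      ((continuous_const.add (hq C)).neg.continuousAt) 0
      (by simpa using pow_pos hd 2)
    filter_upwards [this] with t ht
    exact neg_lt_zero.mp ht
  have h6 : ∀ᶠ t in nhdsWithin (0:ℝ) (Set.Ioi 0), 0 < F t :=
    hFt.eventually_const_lt hd
  -- the main eventual identity
  have hkey : ∀ᶠ t in nhdsWithin (0:ℝ) (Set.Ioi 0),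
      (1 / t) * arcosh ((1 - p * t ^ 2) /
        (Real.sqrt (1 - n ^ 2 * t ^ 2) * Real.sqrt (1 - m ^ 2 * t ^ 2)))
      = F t * (Real.log (1 + t * F t) / ((1 + t * F t) - 1)) := by
    filter_upwards [h1, h2, h3, h4, h5, h6] with t ht hn2 hm2 hp2 hdc hFpos
    have hEn : (0:ℝ) < 1 - n ^ 2 * t ^ 2 := by linarith
    have hEm : (0:ℝ) < 1 - m ^ 2 * t ^ 2 := by linarith
    have hp1 : (0:ℝ) < 1 - p * t ^ 2 := by linarith
    have hEpos : 0 < E t := by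
      rw [hEval t]; exact mul_pos (Real.sqrt_pos.2 hEn) (Real.sqrt_pos.2 hEm)
    have hE2 : E t ^ 2 = (1 - n ^ 2 * t ^ 2) * (1 - m ^ 2 * t ^ 2) := by
      rw [hEval t, mul_pow, Real.sq_sqrt hEn.le, Real.sq_sqrt hEm.le]
    have hsum : 0 < 1 - p * t ^ 2 + E t := by linarith
    have hnum : (1 - p * t ^ 2) ^ 2 - E t ^ 2 = t ^ 2 * (d ^ 2 + C * t ^ 2) := by
      rw [hE2, hC, hd2]; ring
    set A : ℝ := (1 - p * t ^ 2) / E t with hA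
    have hA21 : A ^ 2 - 1 = t ^ 2 * (d ^ 2 + C * t ^ 2) / E t ^ 2 := by
      rw [hA, div_pow, ← hnum]
      field_simp
    have hsq : Real.sqrt (d ^ 2 + C * t ^ 2) ^ 2 = d ^ 2 + C * t ^ 2 :=
      Real.sq_sqrt hdc.le
    have hsqrtA : Real.sqrt (A ^ 2 - 1) = t * Real.sqrt (d ^ 2 + C * t ^ 2) / E t := by
      have he : A ^ 2 - 1 = (t * Real.sqrt (d ^ 2 + C * t ^ 2) / E t) ^ 2 := by
        have h' : (t * Real.sqrt (d ^ 2 + C * t ^ 2) / E t) ^ 2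
            = t ^ 2 * Real.sqrt (d ^ 2 + C * t ^ 2) ^ 2 / E t ^ 2 := by ring
        rw [h', hsq, hA21]
      rw [he, Real.sqrt_sq (by positivity)]
    have hA1 : A = 1 + t ^ 2 * (d ^ 2 + C * t ^ 2) / (E t * (1 - p * t ^ 2 + E t)) := by
      rw [hA]
      field_simp
      nlinarith [hnum]
    have hb : A + Real.sqrt (A ^ 2 - 1) = 1 + t * F t := by
      rw [hsqrtA, hA1, hFval t]
      ring
    have htF : 0 < t * F t := mul_pos ht hFpos
    simp only [arcosh]
    rw [hb]
    have h7 : (1 + t * F t) - 1 = t * F t := by ring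
    rw [h7]
    field_simp [ht.ne', hFpos.ne']
  -- combine
  have hbt : Tendsto (fun t => 1 + t * F t) (nhdsWithin (0:ℝ) (Set.Ioi 0))
      (nhdsWithin 1 {(1:ℝ)}ᶜ) := by
    apply tendsto_nhdsWithin_iff.2
    refine ⟨?_, ?_⟩
    · have : Tendsto (fun t : ℝ => 1 + t * F t) (nhdsWithin (0:ℝ) (Set.Ioi 0))
          (nhds (1 + 0 * d)) :=
        tendsto_const_nhds.add ((tendsto_id.mono_right nhdsWithin_le_nhds).mul hFt)
      simpa using this
    · filter_upwards [h1, h6] with t ht hFpos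
      have h8 : (1:ℝ) < 1 + t * F t := by nlinarith
      exact Set.mem_compl_singleton_iff.2 (ne_of_gt h8)
  have hlog : Tendsto (fun t => Real.log (1 + t * F t) / ((1 + t * F t) - 1))
      (nhdsWithin (0:ℝ) (Set.Ioi 0)) (nhds 1) :=
    aux_log_slope.comp hbt
  have hmul := hFt.mul hlog
  rw [mul_one] at hmul
  exact Tendsto.congr' (hkey.mono fun t ht => ht.symm) hmul

/-- Degeneration of Klein's hyperbolic geometry to Euclidean geometry: the rescaled
Cayley–Klein distance `R · d_R(x,y)` of the disk of radius `R` converges to the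
Euclidean distance `‖x − y‖` as `R → ∞`. -/
theorem klein_degenerates_to_euclidean (x y : EuclideanSpace ℝ (Fin 2)) :
    Tendsto (fun R : ℝ => R * kleinDistR R x y) atTop (nhds ‖x - y‖) := by
  by_cases hxy : x = y
  · subst hxy
    have hev : ∀ᶠ R in atTop, (0:ℝ) = R * kleinDistR R x x := by
      filter_upwards [eventually_gt_atTop (‖x‖)] with R hR
      have hpos : 0 < R ^ 2 - ‖x‖ ^ 2 := by nlinarith [norm_nonneg x]
      have hz : kleinDistR R x x = 0 := by
        rw [kleinDistR, real_inner_self_eq_norm_sq, Real.mul_self_sqrt hpos.le,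
          div_self hpos.ne']
        simp [arcosh]
      rw [hz, mul_zero]
    have : Tendsto (fun _ : ℝ => (0:ℝ)) atTop (nhds ‖x - x‖) := by
      rw [sub_self, norm_zero]; exact tendsto_const_nhds
    exact this.congr' hev
  · set n : ℝ := ‖x‖ with hn
    set m : ℝ := ‖y‖ with hm
    set p : ℝ := (inner ℝ x y : ℝ) with hp
    set d : ℝ := ‖x - y‖ with hdd
    have hd : 0 < d := by
      rw [hdd]
      exact norm_sub_pos_iff.mpr hxy
    have hd2 : d ^ 2 = n ^ 2 - 2 * p + m ^ 2 := by
      rw [hdd, hn, hm, hp]; exact norm_sub_sq_real x y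
    have key := (aux_key n m p d hd2 hd).comp tendsto_inv_atTop_nhdsGT_zero
    apply key.congr'
    filter_upwards [eventually_gt_atTop (0:ℝ), eventually_gt_atTop n, eventually_gt_atTop m]
      with R hR0 hRn hRm
    have hn0 : 0 ≤ n := norm_nonneg x
    have hm0 : 0 ≤ m := norm_nonneg y
    simp only [Function.comp]
    rw [kleinDistR]
    have e1 : Real.sqrt (R ^ 2 - n ^ 2) = R * Real.sqrt (1 - n ^ 2 * (R⁻¹) ^ 2) := by
      have h' : R ^ 2 - n ^ 2 = R ^ 2 * (1 - n ^ 2 * (R⁻¹) ^ 2) := by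
        field_simp
      rw [h', Real.sqrt_mul (sq_nonneg R), Real.sqrt_sq hR0.le]
    have e2 : Real.sqrt (R ^ 2 - m ^ 2) = R * Real.sqrt (1 - m ^ 2 * (R⁻¹) ^ 2) := by
      have h' : R ^ 2 - m ^ 2 = R ^ 2 * (1 - m ^ 2 * (R⁻¹) ^ 2) := by
        field_simp
      rw [h', Real.sqrt_mul (sq_nonneg R), Real.sqrt_sq hR0.le]
    have e3 : (R ^ 2 - p) /
        (Real.sqrt (R ^ 2 - n ^ 2) * Real.sqrt (R ^ 2 - m ^ 2))
        = (1 - p * (R⁻¹) ^ 2) /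
          (Real.sqrt (1 - n ^ 2 * (R⁻¹) ^ 2) * Real.sqrt (1 - m ^ 2 * (R⁻¹) ^ 2)) := by
      rw [e1, e2, show (R * Real.sqrt (1 - n ^ 2 * (R⁻¹) ^ 2)) *
          (R * Real.sqrt (1 - m ^ 2 * (R⁻¹) ^ 2))
          = R ^ 2 * (Real.sqrt (1 - n ^ 2 * (R⁻¹) ^ 2) *
            Real.sqrt (1 - m ^ 2 * (R⁻¹) ^ 2)) by ring, ← div_div]
      congr 1
      field_simp
    rw [← hn, ← hm, ← hp, e3, one_div, inv_inv]
end

section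
/- Through every point of the one-sheeted hyperboloid x² + y² − z² = 1 in ℝ³ there pass exactly two distinct straight lines entirely contained in the surface (the surface is doubly ruled). -/
/-- The one-sheeted hyperboloid `x² + y² − z² = 1` in ℝ³. -/
def Hyperboloid : Set (ℝ × ℝ × ℝ) :=
  {p | p.1 ^ 2 + p.2.1 ^ 2 - p.2.2 ^ 2 = 1}

/-- The one-sheeted hyperboloid is doubly ruled: through each of its points pass exactly
two straight lines entirely contained in the surface (two non-proportional directions
`v`, `w`, and every direction of a line through the point contained in the surface is
proportional to `v` or to `w`). -/
theorem hyperboloid_doubly_ruled (p : ℝ × ℝ × ℝ) (hp : p ∈ Hyperboloid) :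
    ∃ v w : ℝ × ℝ × ℝ, v ≠ 0 ∧ w ≠ 0 ∧ (¬∃ c : ℝ, w = c • v) ∧
      (∀ t : ℝ, p + t • v ∈ Hyperboloid) ∧
      (∀ t : ℝ, p + t • w ∈ Hyperboloid) ∧
      ∀ u : ℝ × ℝ × ℝ, u ≠ 0 → (∀ t : ℝ, p + t • u ∈ Hyperboloid) →
        (∃ c : ℝ, u = c • v) ∨ (∃ c : ℝ, u = c • w) := by
  obtain ⟨a, b, c⟩ := p
  simp only [Hyperboloid, Set.mem_setOf_eq] at hp
  have habpos : 0 < a ^ 2 + b ^ 2 := by nlinarith [sq_nonneg c]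
  refine ⟨(a*c - b, b*c + a, a^2 + b^2), (a*c + b, b*c - a, a^2 + b^2), ?_, ?_, ?_, ?_, ?_, ?_⟩
  · intro h
    rw [Prod.mk.injEq, Prod.mk.injEq] at h
    exact absurd h.2.2 habpos.ne'
  · intro h
    rw [Prod.mk.injEq, Prod.mk.injEq] at h
    exact absurd h.2.2 habpos.ne'
  · rintro ⟨k, hk⟩
    rw [Prod.smul_mk, Prod.smul_mk, Prod.mk.injEq, Prod.mk.injEq, smul_eq_mul, smul_eq_mul,
      smul_eq_mul] at hk
    obtain ⟨h1, h2, h3⟩ := hk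
    have hk1 : (k - 1) * (a ^ 2 + b ^ 2) = 0 := by linear_combination -h3
    rcases mul_eq_zero.mp hk1 with h | h
    · have hk' : k = 1 := by linarith
      subst hk'
      nlinarith [h1, h2, habpos]
    · exact absurd h habpos.ne'
  · intro t
    simp only [Hyperboloid, Set.mem_setOf_eq, Prod.smul_mk, Prod.mk_add_mk, Prod.fst_add,
      Prod.snd_add, smul_eq_mul]
    linear_combination (1 - t ^ 2 * (a ^ 2 + b ^ 2)) * hp
  · intro t
    simp only [Hyperboloid, Set.mem_setOf_eq, Prod.smul_mk, Prod.mk_add_mk, Prod.fst_add,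
      Prod.snd_add, smul_eq_mul]
    linear_combination (1 - t ^ 2 * (a ^ 2 + b ^ 2)) * hp
  · rintro ⟨u1, u2, u3⟩ hu hl
    have h1 := hl 1
    have h2 := hl (-1)
    simp only [Hyperboloid, Set.mem_setOf_eq, Prod.smul_mk, Prod.mk_add_mk, Prod.fst_add,
      Prod.snd_add, smul_eq_mul] at h1 h2
    have hQ : u1 ^ 2 + u2 ^ 2 - u3 ^ 2 = 0 := by linear_combination (h1 + h2) / 2 - hp
    have hL : a * u1 + b * u2 - c * u3 = 0 := by linear_combination (h1 - h2) / 4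
    have hd : (b * u1 - a * u2 - u3) * (b * u1 - a * u2 + u3) = 0 := by
      linear_combination (a ^ 2 + b ^ 2) * hQ + u3 ^ 2 * hp -
        (a * u1 + b * u2 + c * u3) * hL
    rcases mul_eq_zero.mp hd with h | h
    · -- b*u1 - a*u2 = u3 : direction w
      refine Or.inr ⟨u3 / (a ^ 2 + b ^ 2), ?_⟩
      simp only [Prod.smul_mk, Prod.mk.injEq, smul_eq_mul]
      refine ⟨?_, ?_, ?_⟩ <;> field_simp
      · linear_combination a * hL + b * h
      · linear_combination b * hL - a * h
    · -- b*u1 - a*u2 = -u3 : direction v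
      refine Or.inl ⟨u3 / (a ^ 2 + b ^ 2), ?_⟩
      simp only [Prod.smul_mk, Prod.mk.injEq, smul_eq_mul]
      refine ⟨?_, ?_, ?_⟩ <;> field_simp
      · linear_combination a * hL + b * h
      · linear_combination b * hL - a * h
end

section
/- Hilbert metric triangle inequality: for a bounded open convex set K ⊂ ℝⁿ, the Hilbert distance d_K(x,y) = (1/2) log((|a−y||b−x|)/(|a−x||b−y|)) (where a, b are the boundary intersections of the line through x and y, in the order a, x, y, b), extended by d_K(x,x)=0, satisfies the triangle inequality d_K(x,z) ≤ d_K(x,y) + d_K(y,z) for all x, y, z ∈ K. -/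
open Set


lemma exists_forward_frontier {n : ℕ} {K : Set (EuclideanSpace ℝ (Fin n))}
    (hKb : Bornology.IsBounded K) (hKo : IsOpen K)
    {x y : EuclideanSpace ℝ (Fin n)} (hx : x ∈ K) (hy : y ∈ K) (hxy : x ≠ y) :
    ∃ t : ℝ, 1 < t ∧ x + t • (y - x) ∈ frontier K := by
  rw [isBounded_iff_forall_norm_le] at hKb
  obtain ⟨C, hC⟩ := hKb
  set g : ℝ → EuclideanSpace ℝ (Fin n) := fun r => x + r • (y - x) with hg
  have hgc : Continuous g := by
    apply Continuous.add continuous_const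
    exact continuous_id.smul continuous_const
  set T : Set ℝ := g ⁻¹' K with hT
  have hTo : IsOpen T := hKo.preimage hgc
  have h1T : (1:ℝ) ∈ T := by
    have : g 1 = y := by simp [hg]
    simp only [hT, mem_preimage, this]; exact hy
  have hny : (0:ℝ) < ‖y - x‖ := by
    rw [norm_pos_iff]; exact sub_ne_zero.2 hxy.symm
  have hbdd : BddAbove T := by
    refine ⟨(C + ‖x‖) / ‖y - x‖, fun r hr => ?_⟩
    have h1 : ‖g r‖ ≤ C := hC _ hr
    have h2 : ‖r • (y - x)‖ ≤ C + ‖x‖ := by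
      have : r • (y - x) = g r - x := by simp [hg]
      rw [this]
      calc ‖g r - x‖ ≤ ‖g r‖ + ‖x‖ := norm_sub_le _ _
        _ ≤ C + ‖x‖ := by linarith
    rw [norm_smul, Real.norm_eq_abs] at h2
    rw [le_div_iff₀ hny]
    calc r * ‖y - x‖ ≤ |r| * ‖y - x‖ :=
          mul_le_mul_of_nonneg_right (le_abs_self r) hny.le
      _ ≤ C + ‖x‖ := h2
  have hTne : T.Nonempty := ⟨1, h1T⟩
  set t := sSup T with htdef
  have htT : t ∉ T := by
    intro h
    obtain ⟨ε, hε, hball⟩ := Metric.isOpen_iff.1 hTo t h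
    have hmem : t + ε/2 ∈ T := by
      apply hball
      rw [Metric.mem_ball, Real.dist_eq, show t + ε/2 - t = ε/2 by ring,
        abs_of_pos (by linarith)]
      linarith
    linarith [le_csSup hbdd hmem]
  have h1t : 1 < t := by
    obtain ⟨ε, hε, hball⟩ := Metric.isOpen_iff.1 hTo 1 h1T
    have hmem : 1 + ε/2 ∈ T := by
      apply hball
      rw [Metric.mem_ball, Real.dist_eq, show 1 + ε/2 - 1 = ε/2 by ring,
        abs_of_pos (by linarith)]
      linarith
    have := le_csSup hbdd hmem
    linarith
  have hclT : t ∈ closure T := csSup_mem_closure hTne hbdd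
  have hsub : closure T ⊆ g ⁻¹' (closure K) :=
    closure_minimal (fun r hr => subset_closure hr) (isClosed_closure.preimage hgc)
  refine ⟨t, h1t, ?_⟩
  rw [hKo.frontier_eq]
  exact ⟨hsub hclT, htT⟩

lemma funk_ineq {n : ℕ} {K : Set (EuclideanSpace ℝ (Fin n))}
    (hKo : IsOpen K) (hKc : Convex ℝ K)
    {x y z : EuclideanSpace ℝ (Fin n)} (hx : x ∈ K) (hy : y ∈ K) (hz : z ∈ K)
    {t₀ t₁ t₂ : ℝ} (ht₀ : 1 < t₀) (ht₁ : 1 < t₁) (ht₂ : 1 < t₂)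
    (hb₀ : x + t₀ • (z - x) ∈ frontier K)
    (hb₁ : x + t₁ • (y - x) ∈ closure K)
    (hb₂ : y + t₂ • (z - y) ∈ closure K) :
    t₀ / (t₀ - 1) ≤ (t₁ / (t₁ - 1)) * (t₂ / (t₂ - 1)) := by
  have hb₀K : x + t₀ • (z - x) ∉ K := by
    rw [hKo.frontier_eq] at hb₀; exact hb₀.2
  obtain ⟨f, hf⟩ := geometric_hahn_banach_open_point hKc hKo hb₀K
  set c := f (x + t₀ • (z - x)) with hc
  have hfx : f x < c := hf x hx
  have hfy : f y < c := hf y hy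
  have hfz : f z < c := hf z hz
  have hcl : ∀ w ∈ closure K, f w ≤ c := by
    intro w hw
    have : closure K ⊆ f ⁻¹' (Iic c) :=
      closure_minimal (fun a ha => (hf a ha).le) (isClosed_Iic.preimage f.continuous)
    exact this hw
  have e₀ : f x + t₀ * (f z - f x) = c := by
    rw [hc, map_add, map_smul, map_sub]; simp [smul_eq_mul]
  have i₁ : f x + t₁ * (f y - f x) ≤ c := by
    have := hcl _ hb₁
    rwa [map_add, map_smul, map_sub, smul_eq_mul] at this
  have i₂ : f y + t₂ * (f z - f y) ≤ c := by
    have := hcl _ hb₂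
    rwa [map_add, map_smul, map_sub, smul_eq_mul] at this
  set u := c - f x with hu'
  set v := c - f z with hv'
  set w := c - f y with hw'
  have hu : 0 < u := by simp [hu']; linarith
  have hv : 0 < v := by simp [hv']; linarith
  have hw : 0 < w := by simp [hw']; linarith
  have e₀' : t₀ * v = (t₀ - 1) * u := by simp only [hu', hv']; nlinarith [e₀]
  have h₁ : (t₁ - 1) * u ≤ t₁ * w := by simp only [hu', hw']; nlinarith [i₁]
  have h₂ : (t₂ - 1) * w ≤ t₂ * v := by simp only [hw', hv']; nlinarith [i₂]
  rw [div_mul_div_comm, div_le_div_iff₀ (by linarith) (by nlinarith)]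
  have key : (t₁ - 1) * (t₂ - 1) * u ≤ t₁ * t₂ * v := by
    calc (t₁ - 1) * (t₂ - 1) * u = (t₂ - 1) * ((t₁ - 1) * u) := by ring
      _ ≤ (t₂ - 1) * (t₁ * w) := mul_le_mul_of_nonneg_left h₁ (by linarith)
      _ = t₁ * ((t₂ - 1) * w) := by ring
      _ ≤ t₁ * (t₂ * v) := mul_le_mul_of_nonneg_left h₂ (by linarith)
      _ = t₁ * t₂ * v := by ring
  have k2 : t₀ * ((t₁ - 1) * (t₂ - 1) * u) ≤ t₀ * (t₁ * t₂ * v) :=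
    mul_le_mul_of_nonneg_left key (by linarith)
  refine le_of_mul_le_mul_right ?_ hu
  calc t₀ * ((t₁ - 1) * (t₂ - 1)) * u = t₀ * ((t₁ - 1) * (t₂ - 1) * u) := by ring
    _ ≤ t₀ * (t₁ * t₂ * v) := k2
    _ = t₁ * t₂ * (t₀ * v) := by ring
    _ = t₁ * t₂ * ((t₀ - 1) * u) := by rw [e₀']
    _ = t₁ * t₂ * (t₀ - 1) * u := by ring

lemma d_repr {n : ℕ} {K : Set (EuclideanSpace ℝ (Fin n))}
    (hKb : Bornology.IsBounded K) (hKo : IsOpen K)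
    {d : EuclideanSpace ℝ (Fin n) → EuclideanSpace ℝ (Fin n) → ℝ}
    (hd : ∀ x ∈ K, ∀ y ∈ K, x ≠ y →
      ∀ a ∈ frontier K, ∀ b ∈ frontier K,
        (∃ s : ℝ, s < 0 ∧ a = x + s • (y - x)) →
        (∃ t : ℝ, 1 < t ∧ b = x + t • (y - x)) →
        d x y = (1 / 2) * Real.log ((dist a y * dist b x) / (dist a x * dist b y)))
    {x y : EuclideanSpace ℝ (Fin n)} (hx : x ∈ K) (hy : y ∈ K) (hxy : x ≠ y) :
    ∃ s t : ℝ, s < 0 ∧ 1 < t ∧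
      x + s • (y - x) ∈ frontier K ∧ x + t • (y - x) ∈ frontier K ∧
      d x y = (1 / 2) * Real.log (((1 - s) * t) / ((-s) * (t - 1))) := by
  obtain ⟨t, ht, hbt⟩ := exists_forward_frontier hKb hKo hx hy hxy
  obtain ⟨t', ht', hbt'⟩ := exists_forward_frontier hKb hKo hy hx hxy.symm
  set s : ℝ := 1 - t' with hs'
  have hs : s < 0 := by simp [hs']; linarith
  have hseq : x + s • (y - x) = y + t' • (x - y) := by
    simp only [hs']; module
  have hat : x + s • (y - x) ∈ frontier K := by rw [hseq]; exact hbt'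
  refine ⟨s, t, hs, ht, hat, hbt, ?_⟩
  have heq := hd x hx y hy hxy _ hat _ hbt ⟨s, hs, rfl⟩ ⟨t, ht, rfl⟩
  have hny : (0:ℝ) < ‖y - x‖ := by rw [norm_pos_iff]; exact sub_ne_zero.2 hxy.symm
  have day : dist (x + s • (y - x)) y = (1 - s) * ‖y - x‖ := by
    rw [dist_eq_norm, show x + s • (y - x) - y = (s - 1) • (y - x) by module,
      norm_smul, Real.norm_eq_abs, abs_of_neg (by linarith)]
    ring
  have dax : dist (x + s • (y - x)) x = (-s) * ‖y - x‖ := by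
    rw [dist_eq_norm, show x + s • (y - x) - x = s • (y - x) by module,
      norm_smul, Real.norm_eq_abs, abs_of_neg hs]
  have dbx : dist (x + t • (y - x)) x = t * ‖y - x‖ := by
    rw [dist_eq_norm, show x + t • (y - x) - x = t • (y - x) by module,
      norm_smul, Real.norm_eq_abs, abs_of_pos (by linarith)]
  have dby : dist (x + t • (y - x)) y = (t - 1) * ‖y - x‖ := by
    rw [dist_eq_norm, show x + t • (y - x) - y = (t - 1) • (y - x) by module,
      norm_smul, Real.norm_eq_abs, abs_of_pos (by linarith)]
  rw [heq, day, dax, dbx, dby]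
  congr 1
  rw [show (1 - s) * ‖y - x‖ * (t * ‖y - x‖) = ((1 - s) * t) * (‖y - x‖ * ‖y - x‖) by ring,
    show -s * ‖y - x‖ * ((t - 1) * ‖y - x‖) = ((-s) * (t - 1)) * (‖y - x‖ * ‖y - x‖) by ring,
    mul_div_mul_right _ _ (by positivity)]

lemma ratio_one_le {s t : ℝ} (hs : s < 0) (ht : 1 < t) :
    1 ≤ ((1 - s) * t) / ((-s) * (t - 1)) := by
  rw [le_div_iff₀ (by nlinarith)]
  nlinarith

lemma ratio_pos {s t : ℝ} (hs : s < 0) (ht : 1 < t) :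
    0 < ((1 - s) * t) / ((-s) * (t - 1)) := by
  apply div_pos <;> nlinarith

/-- Triangle inequality for the Hilbert metric of a bounded open convex set
`K ⊆ ℝⁿ`: if `d` vanishes on the diagonal and, for all distinct `x, y ∈ K`,
`d x y = (1/2) log((|a−y||b−x|)/(|a−x||b−y|))` whenever `a, b` are the two boundary
points of `K` on the line through `x` and `y`, with `a` on the `x`-side and `b` on the
`y`-side (so the order along the line is `a, x, y, b`), then
`d x z ≤ d x y + d y z` for all `x, y, z ∈ K`. -/
theorem hilbert_metric_triangle (n : ℕ) (K : Set (EuclideanSpace ℝ (Fin n)))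
    (hKb : Bornology.IsBounded K) (hKo : IsOpen K) (hKc : Convex ℝ K)
    (d : EuclideanSpace ℝ (Fin n) → EuclideanSpace ℝ (Fin n) → ℝ)
    (hdiag : ∀ x, d x x = 0)
    (hd : ∀ x ∈ K, ∀ y ∈ K, x ≠ y →
      ∀ a ∈ frontier K, ∀ b ∈ frontier K,
        (∃ s : ℝ, s < 0 ∧ a = x + s • (y - x)) →
        (∃ t : ℝ, 1 < t ∧ b = x + t • (y - x)) →
        d x y = (1 / 2) * Real.log ((dist a y * dist b x) / (dist a x * dist b y))) :
    ∀ x ∈ K, ∀ y ∈ K, ∀ z ∈ K, d x z ≤ d x y + d y z := by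
  intro x hx y hy z hz
  rcases eq_or_ne x y with rfl | hxy
  · rw [hdiag]; linarith
  rcases eq_or_ne y z with rfl | hyz
  · rw [hdiag]; linarith
  rcases eq_or_ne x z with rfl | hxz
  · -- goal : d x x ≤ d x y + d y x
    rw [hdiag]
    obtain ⟨s₁, t₁, hs₁, ht₁, _, _, hd₁⟩ := d_repr hKb hKo hd hx hy hxy
    obtain ⟨s₂, t₂, hs₂, ht₂, _, _, hd₂⟩ := d_repr hKb hKo hd hy hx hxy.symm
    have h1 : 0 ≤ d x y := by
      rw [hd₁]
      exact mul_nonneg (by norm_num) (Real.log_nonneg (ratio_one_le hs₁ ht₁))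
    have h2 : 0 ≤ d y x := by
      rw [hd₂]
      exact mul_nonneg (by norm_num) (Real.log_nonneg (ratio_one_le hs₂ ht₂))
    linarith
  · obtain ⟨s₀, t₀, hs₀, ht₀, ha₀, hb₀, hd₀⟩ := d_repr hKb hKo hd hx hz hxz
    obtain ⟨s₁, t₁, hs₁, ht₁, ha₁, hb₁, hd₁⟩ := d_repr hKb hKo hd hx hy hxy
    obtain ⟨s₂, t₂, hs₂, ht₂, ha₂, hb₂, hd₂⟩ := d_repr hKb hKo hd hy hz hyz
    have F1 : t₀ / (t₀ - 1) ≤ (t₁ / (t₁ - 1)) * (t₂ / (t₂ - 1)) :=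
      funk_ineq hKo hKc hx hy hz ht₀ ht₁ ht₂ hb₀
        (frontier_subset_closure hb₁) (frontier_subset_closure hb₂)
    have ha₀' : z + (1 - s₀) • (x - z) ∈ frontier K := by
      rw [show z + (1 - s₀) • (x - z) = x + s₀ • (z - x) by module]; exact ha₀
    have ha₂' : z + (1 - s₂) • (y - z) ∈ closure K := by
      rw [show z + (1 - s₂) • (y - z) = y + s₂ • (z - y) by module]
      exact frontier_subset_closure ha₂
    have ha₁' : y + (1 - s₁) • (x - y) ∈ closure K := by
      rw [show y + (1 - s₁) • (x - y) = x + s₁ • (y - x) by module]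
      exact frontier_subset_closure ha₁
    have F2 : (1 - s₀) / ((1 - s₀) - 1) ≤
        ((1 - s₂) / ((1 - s₂) - 1)) * ((1 - s₁) / ((1 - s₁) - 1)) :=
      funk_ineq hKo hKc hz hy hx (by linarith) (by linarith) (by linarith)
        ha₀' ha₂' ha₁'
    rw [show (1 - s₀) - 1 = -s₀ by ring, show (1 - s₂) - 1 = -s₂ by ring,
      show (1 - s₁) - 1 = -s₁ by ring] at F2
    set R₀ := ((1 - s₀) * t₀) / ((-s₀) * (t₀ - 1)) with hR₀
    set R₁ := ((1 - s₁) * t₁) / ((-s₁) * (t₁ - 1)) with hR₁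
    set R₂ := ((1 - s₂) * t₂) / ((-s₂) * (t₂ - 1)) with hR₂
    have hRle : R₀ ≤ R₁ * R₂ := by
      have hA : (0:ℝ) ≤ (1 - s₀) / (-s₀) := by
        apply div_nonneg <;> linarith
      have hApos : (0:ℝ) ≤ (t₁ / (t₁ - 1)) * (t₂ / (t₂ - 1)) := by
        apply mul_nonneg <;> apply div_nonneg <;> linarith
      have hn0 : s₀ ≠ 0 := hs₀.ne
      have hn1 : s₁ ≠ 0 := hs₁.ne
      have hn2 : s₂ ≠ 0 := hs₂.ne
      have hm0 : t₀ - 1 ≠ 0 := by linarith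
      have hm1 : t₁ - 1 ≠ 0 := by linarith
      have hm2 : t₂ - 1 ≠ 0 := by linarith
      calc R₀ = (t₀ / (t₀ - 1)) * ((1 - s₀) / (-s₀)) := by rw [hR₀]; field_simp
        _ ≤ ((t₁ / (t₁ - 1)) * (t₂ / (t₂ - 1))) * (((1 - s₂) / (-s₂)) * ((1 - s₁) / (-s₁))) :=
            mul_le_mul F1 F2 hA hApos
        _ = R₁ * R₂ := by rw [hR₁, hR₂]; field_simp
    rw [hd₀, hd₁, hd₂]
    have h₀pos : 0 < R₀ := ratio_pos hs₀ ht₀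
    have h₁pos : 0 < R₁ := ratio_pos hs₁ ht₁
    have h₂pos : 0 < R₂ := ratio_pos hs₂ ht₂
    have hlog : Real.log R₀ ≤ Real.log R₁ + Real.log R₂ := by
      rw [← Real.log_mul h₁pos.ne' h₂pos.ne']
      exact Real.log_le_log h₀pos hRle
    linarith
end
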